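/- (Chebyshev–Markov extremal distributions) Let 𝓛₀₁ be the set of all Borel probability measures on ℝ with mean 0 and variance 1. Then for every x ≤ 0, sup_{μ∈𝓛₀₁} μ((-∞,x]) = 1/(1+x²), and for every x ≥ 0, inf_{μ∈𝓛₀₁} μ((-∞,x]) = x²/(1+x²). Moreover sup_{μ∈𝓛₀₁} μ((-∞,x]) = 1 for x ≥ 0 and inf_{μ∈𝓛₀₁} μ((-∞,x]) = 0 for x ≤ 0. -/

import Mathlib

open MeasureTheory Set

/-- The set of all Borel probability measures on ℝ with mean 0 and variance 1. -/
def stdMeasures : Set (Measure ℝ) :=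
  {μ | IsProbabilityMeasure μ ∧ (∫ x, x ∂μ) = 0 ∧ (∫ x, x ^ 2 ∂μ) = 1}

/-- The distribution function of a measure: `F_μ(x) = μ((-∞, x])`. -/
noncomputable def distFun (μ : Measure ℝ) (x : ℝ) : ℝ := (μ (Iic x)).toReal

noncomputable def tp (b : ℝ) : Measure ℝ :=
  ENNReal.ofReal (b^2/(1+b^2)) • Measure.dirac (-1/b) +
  ENNReal.ofReal (1/(1+b^2)) • Measure.dirac b

lemma tp_integral (b : ℝ) (f : ℝ → ℝ) :
    ∫ x, f x ∂(tp b) = (b^2/(1+b^2)) * f (-1/b) + (1/(1+b^2)) * f b := by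
  have h1 : (0:ℝ) < 1 + b^2 := by positivity
  have i1 : Integrable f (ENNReal.ofReal (b^2/(1+b^2)) • Measure.dirac (-1/b)) :=
    ((integrable_const (f (-1/b))).congr (MeasureTheory.ae_eq_dirac f).symm).smul_measure
      ENNReal.ofReal_ne_top
  have i2 : Integrable f (ENNReal.ofReal (1/(1+b^2)) • Measure.dirac b) :=
    ((integrable_const (f b)).congr (MeasureTheory.ae_eq_dirac f).symm).smul_measure
      ENNReal.ofReal_ne_top
  rw [tp, integral_add_measure i1 i2, integral_smul_measure, integral_smul_measure,
    integral_dirac, integral_dirac, ENNReal.toReal_ofReal (by positivity),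
    ENNReal.toReal_ofReal (by positivity)]
  simp [smul_eq_mul]

lemma tp_prob (b : ℝ) : IsProbabilityMeasure (tp b) := by
  constructor
  have h1 : (0:ℝ) < 1 + b^2 := by positivity
  rw [tp]
  simp only [Measure.add_apply, Measure.smul_apply, smul_eq_mul, Measure.dirac_apply_of_mem
    (mem_univ _), mul_one]
  rw [← ENNReal.ofReal_add (by positivity) (by positivity), ← ENNReal.ofReal_one]
  congr 1
  field_simp; try ring

lemma tp_mem (b : ℝ) (hb : 0 < b) : tp b ∈ stdMeasures := by
  refine ⟨tp_prob b, ?_, ?_⟩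
  · rw [tp_integral]
    field_simp; try ring
  · rw [tp_integral]
    have hb' : b ≠ 0 := ne_of_gt hb
    field_simp; try ring

lemma tp_distFun (b x : ℝ) :
    distFun (tp b) x =
      (if -1/b ≤ x then b^2/(1+b^2) else 0) + (if b ≤ x then 1/(1+b^2) else 0) := by
  have h1 : (0:ℝ) < 1 + b^2 := by positivity
  simp only [distFun, tp, Measure.add_apply, Measure.smul_apply, smul_eq_mul,
    Measure.dirac_apply' _ measurableSet_Iic, indicator_apply, mem_Iic, Pi.one_apply,
    mul_ite, mul_one, mul_zero]
  split_ifs with hA hB hB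
  · rw [← ENNReal.ofReal_add (by positivity) (by positivity),
      ENNReal.toReal_ofReal (by positivity)]
  · simp [ENNReal.toReal_ofReal (show (0:ℝ) ≤ b^2/(1+b^2) by positivity)]
  · simp [ENNReal.toReal_ofReal (show (0:ℝ) ≤ 1/(1+b^2) by positivity)]
    positivity
  · simp

lemma cantelli (μ : Measure ℝ) (hμ : μ ∈ stdMeasures) {c t : ℝ} (ht : 0 < t) {S : Set ℝ}
    (hS : ∀ y ∈ S, t ≤ (y + c)^2) : (μ S).toReal ≤ (1 + c^2)/t := by
  obtain ⟨hp, h1, h2⟩ := hμ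
  have int2 : Integrable (fun y : ℝ => y^2) μ := by
    by_contra h; rw [integral_undef h] at h2; norm_num at h2
  have int1 : Integrable (fun y : ℝ => y) μ := by
    refine Integrable.mono' ((int2.add (integrable_const 1)).div_const 2)
      measurable_id.aestronglyMeasurable (ae_of_all _ fun y => ?_)
    simp only [Pi.div_apply, Pi.add_apply, Pi.one_apply, Real.norm_eq_abs]
    rw [abs_le]
    constructor <;> nlinarith [sq_nonneg (y-1), sq_nonneg (y+1)]
  have intf : Integrable (fun y : ℝ => (y + c)^2) μ := by
    have he : (fun y : ℝ => (y+c)^2) = fun y => y^2 + ((2*c)*y + c^2) := by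
      funext y; ring
    rw [he]
    exact int2.add ((int1.const_mul (2*c)).add (integrable_const _))
  have key := mul_meas_ge_le_integral_of_nonneg (ae_of_all μ fun y => sq_nonneg (y+c)) intf t
  have hint : ∫ y, (y+c)^2 ∂μ = 1 + c^2 := by
    have he : (fun y : ℝ => (y+c)^2) = fun y => y^2 + ((2*c)*y + c^2) := by
      funext y; ring
    have g2 : Integrable (fun y : ℝ => 2*c*y) μ := int1.const_mul (2*c)
    have g1 : Integrable (fun y : ℝ => 2*c*y + c^2) μ := g2.add (integrable_const _)
    rw [he, integral_add int2 g1, integral_add g2 (integrable_const _),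
      MeasureTheory.integral_const_mul, h1, h2]
    simp [measure_univ]
  have hmono : μ S ≤ μ {y | t ≤ (y+c)^2} := measure_mono hS
  have hfin : μ {y | t ≤ (y+c)^2} ≠ ⊤ := measure_ne_top μ _
  have h3 : (μ S).toReal ≤ (μ {y | t ≤ (y+c)^2}).toReal :=
    ENNReal.toReal_mono hfin hmono
  rw [hint] at key
  rw [le_div_iff₀ ht]
  calc (μ S).toReal * t ≤ (μ {y | t ≤ (y+c)^2}).toReal * t := by
        exact mul_le_mul_of_nonneg_right h3 ht.le
    _ ≤ 1 + c^2 := by rw [mul_comm]; exact key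

lemma distFun_nonneg (μ : Measure ℝ) (x : ℝ) : 0 ≤ distFun μ x := ENNReal.toReal_nonneg

lemma distFun_le_one (μ : Measure ℝ) (hμ : μ ∈ stdMeasures) (x : ℝ) : distFun μ x ≤ 1 := by
  have := hμ.1
  rw [distFun]
  exact ENNReal.toReal_le_of_le_ofReal zero_le_one (by simpa using prob_le_one)

lemma quad_pos {x : ℝ} (hx : x ≠ 0) : (0:ℝ) < (x + 1/x)^2 := by
  have h : x + 1/x ≠ 0 := by
    have : x + 1/x = (x^2 + 1)/x := by field_simp
    rw [this]
    exact div_ne_zero (by positivity) hx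
  exact sq_pos_of_ne_zero h

lemma quad_val {x : ℝ} (hx : x ≠ 0) : (1 + (1/x)^2)/((x + 1/x)^2) = 1/(1+x^2) := by
  have h1 : (0:ℝ) < 1 + x^2 := by positivity
  rw [div_eq_div_iff (quad_pos hx).ne' h1.ne']
  field_simp
  ring

lemma ub_neg (μ : Measure ℝ) (hμ : μ ∈ stdMeasures) {x : ℝ} (hx : x < 0) :
    distFun μ x ≤ 1 / (1 + x^2) := by
  have hx0 : x ≠ 0 := ne_of_lt hx
  have h1x : 1/x < 0 := one_div_neg.mpr hx
  have key := cantelli μ hμ (c := 1/x) (quad_pos hx0) (S := Iic x) (fun y hy => by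
    have hy' : y ≤ x := hy
    nlinarith [mul_nonneg (by linarith : (0:ℝ) ≤ x - y) (by linarith : (0:ℝ) ≤ -(y + x + 2*(1/x)))])
  rwa [quad_val hx0] at key

lemma lb_pos (μ : Measure ℝ) (hμ : μ ∈ stdMeasures) {x : ℝ} (hx : 0 < x) :
    x^2/(1+x^2) ≤ distFun μ x := by
  have hx0 : x ≠ 0 := ne_of_gt hx
  have h1x : 0 < 1/x := one_div_pos.mpr hx
  have key := cantelli μ hμ (c := 1/x) (quad_pos hx0) (S := Ioi x) (fun y hy => by
    have hy' : x < y := hy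
    nlinarith)
  rw [quad_val hx0] at key
  have := hμ.1
  have hcompl : μ (Iic x) = 1 - μ (Ioi x) := by
    rw [← compl_Ioi]; exact prob_compl_eq_one_sub measurableSet_Ioi
  have hto : distFun μ x = 1 - (μ (Ioi x)).toReal := by
    rw [distFun, hcompl, ENNReal.toReal_sub_of_le prob_le_one ENNReal.one_ne_top,
      ENNReal.toReal_one]
  have h1 : (0:ℝ) < 1 + x^2 := by positivity
  have hval : x^2/(1+x^2) = 1 - 1/(1+x^2) := by field_simp; ring
  rw [hto, hval]
  linarith

lemma mem_image_S (x b : ℝ) (hb : 0 < b) :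
    distFun (tp b) x ∈ (fun μ : Measure ℝ => distFun μ x) '' stdMeasures :=
  ⟨tp b, tp_mem b hb, rfl⟩

lemma S_nonempty (x : ℝ) : ((fun μ : Measure ℝ => distFun μ x) '' stdMeasures).Nonempty :=
  ⟨_, mem_image_S x 1 one_pos⟩

lemma S_bddAbove (x : ℝ) : BddAbove ((fun μ : Measure ℝ => distFun μ x) '' stdMeasures) :=
  ⟨1, by rintro a ⟨μ, hμ, rfl⟩; exact distFun_le_one μ hμ x⟩

lemma S_bddBelow (x : ℝ) : BddBelow ((fun μ : Measure ℝ => distFun μ x) '' stdMeasures) :=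
  ⟨0, by rintro a ⟨μ, hμ, rfl⟩; exact distFun_nonneg μ x⟩

-- distFun of tp b at x when x is between the atoms
lemma tp_val_mid {b x : ℝ} (hb : 0 < b) (h1 : -1/b ≤ x) (h2 : x < b) :
    distFun (tp b) x = b^2/(1+b^2) := by
  rw [tp_distFun, if_pos h1, if_neg (not_le.mpr h2), add_zero]

lemma sup_eq_one {x : ℝ} (hx : 0 ≤ x) :
    sSup ((fun μ : Measure ℝ => distFun μ x) '' stdMeasures) = 1 := by
  apply csSup_eq_of_forall_le_of_forall_lt_exists_gt (S_nonempty x)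
  · rintro a ⟨μ, hμ, rfl⟩; exact distFun_le_one μ hμ x
  · intro w hw
    set b : ℝ := max (x+1) (Real.sqrt (w/(1-w)) + 1) with hbdef
    have hb : 0 < b := lt_of_lt_of_le (by linarith) (le_max_left _ _)
    have hbx : x < b := lt_of_lt_of_le (by linarith) (le_max_left _ _)
    refine ⟨_, mem_image_S x b hb, ?_⟩
    have hnb : -1/b < 0 := div_neg_of_neg_of_pos (by norm_num) hb
    rw [tp_val_mid hb (by linarith) hbx]
    rcases le_or_gt w 0 with hw0 | hw0
    · have : (0:ℝ) < b^2/(1+b^2) := by positivity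
      linarith
    · have h1w : (0:ℝ) < 1 - w := by linarith
      have hsnn : (0:ℝ) ≤ w/(1-w) := by positivity
      have hsb : Real.sqrt (w/(1-w)) < b :=
        lt_of_lt_of_le (lt_add_one _) (le_max_right _ _)
      have hsq : Real.sqrt (w/(1-w)) ^ 2 = w/(1-w) := Real.sq_sqrt hsnn
      have hlt : w/(1-w) < b^2 := by nlinarith [Real.sqrt_nonneg (w/(1-w))]
      have hlt' : w < b^2*(1-w) := (div_lt_iff₀ h1w).mp hlt
      rw [lt_div_iff₀ (by positivity : (0:ℝ) < 1 + b^2)]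
      nlinarith

lemma sup_neg {x : ℝ} (hx : x < 0) :
    sSup ((fun μ : Measure ℝ => distFun μ x) '' stdMeasures) = 1/(1+x^2) := by
  apply le_antisymm
  · apply csSup_le (S_nonempty x)
    rintro a ⟨μ, hμ, rfl⟩
    exact ub_neg μ hμ hx
  · have h1x : 1/x < 0 := one_div_neg.mpr hx
    have hb : 0 < -1/x := by rw [neg_div]; linarith
    have hval : distFun (tp (-1/x)) x = 1/(1+x^2) := by
      have hx0 : x ≠ 0 := ne_of_lt hx
      have he : -1/(-1/x) = x := by field_simp
      rw [tp_val_mid hb (le_of_eq he) (by linarith)]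
      rw [div_eq_div_iff (by positivity : ((1:ℝ) + (-1/x)^2) ≠ 0) (by positivity : ((1:ℝ) + x^2) ≠ 0)]
      field_simp
      ring
    exact hval ▸ le_csSup (S_bddAbove x) (mem_image_S x _ hb)

lemma inf_nonpos {x : ℝ} (hx : x ≤ 0) :
    sInf ((fun μ : Measure ℝ => distFun μ x) '' stdMeasures) = 0 := by
  apply csInf_eq_of_forall_ge_of_forall_gt_exists_lt (S_nonempty x)
  · rintro a ⟨μ, hμ, rfl⟩
    exact distFun_nonneg μ x
  · intro w hw
    rcases lt_or_eq_of_le hx with hx' | hx'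
    · have hx0 : x ≠ 0 := ne_of_lt hx'
      have h2x : 2/x < 0 := div_neg_of_pos_of_neg (by norm_num) hx'
      have hb : 0 < -2/x := by rw [neg_div]; linarith
      refine ⟨_, mem_image_S x (-2/x) hb, ?_⟩
      have he : -1/(-2/x) = x/2 := by field_simp
      rw [tp_distFun, if_neg (by rw [he]; intro h; linarith), if_neg (by intro h; linarith)]
      simpa using hw
    · subst hx'
      set m := min w 1 with hm
      have hm0 : 0 < m := lt_min hw one_pos
      set b := Real.sqrt m / 2 with hbdef
      have hb : 0 < b := by positivity
      refine ⟨_, mem_image_S 0 b hb, ?_⟩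
      have hnb : -1/b < 0 := div_neg_of_neg_of_pos (by norm_num) hb
      rw [tp_val_mid hb (by linarith) hb]
      have hb2 : b^2 = m/4 := by
        rw [hbdef, div_pow, Real.sq_sqrt hm0.le]; norm_num
      have hmw : m ≤ w := min_le_left _ _
      rw [div_lt_iff₀ (by positivity : (0:ℝ) < 1 + b^2)]
      nlinarith

lemma inf_nonneg {x : ℝ} (hx : 0 ≤ x) :
    sInf ((fun μ : Measure ℝ => distFun μ x) '' stdMeasures) = x^2/(1+x^2) := by
  apply csInf_eq_of_forall_ge_of_forall_gt_exists_lt (S_nonempty x)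
  · rintro a ⟨μ, hμ, rfl⟩
    rcases lt_or_eq_of_le hx with hx' | hx'
    · exact lb_pos μ hμ hx'
    · subst hx'
      simpa using distFun_nonneg μ 0
  · intro w hw
    have h1 : (0:ℝ) < 1 + x^2 := by positivity
    have hw0 : 0 < w := lt_of_le_of_lt (by positivity) hw
    rcases lt_or_ge w 1 with hw1 | hw1
    · have h1w : (0:ℝ) < 1 - w := by linarith
      set K := w/(1-w) with hK
      have hxK : x^2 < K := by
        rw [hK, lt_div_iff₀ h1w]
        have := (div_lt_iff₀ h1).mp hw
        nlinarith
      have hKnn : 0 ≤ (x^2 + K)/2 := by positivity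
      set b := Real.sqrt ((x^2 + K)/2) with hbdef
      have hb2 : b^2 = (x^2 + K)/2 := Real.sq_sqrt hKnn
      have hbx : x < b := by
        rw [hbdef, Real.lt_sqrt hx]
        linarith
      have hb : 0 < b := lt_of_le_of_lt hx hbx
      have hnb : -1/b < 0 := div_neg_of_neg_of_pos (by norm_num) hb
      refine ⟨_, mem_image_S x b hb, ?_⟩
      rw [tp_val_mid hb (by linarith) hbx]
      have hbK : b^2 < K := by rw [hb2]; linarith
      have hlt' : b^2*(1-w) < w := by
        have h := (lt_div_iff₀ h1w).mp (show b^2 < w/(1-w) from hbK)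
        linarith
      rw [div_lt_iff₀ (by positivity : (0:ℝ) < 1 + b^2)]
      nlinarith
    · set b := x + 1 with hbdef
      have hb : 0 < b := by linarith
      have hnb : -1/b < 0 := div_neg_of_neg_of_pos (by norm_num) hb
      refine ⟨_, mem_image_S x b hb, ?_⟩
      rw [tp_val_mid hb (by linarith) (by linarith)]
      have : b^2/(1+b^2) < 1 := by
        rw [div_lt_one (by positivity)]; linarith
      linarith

/-- Chebyshev–Markov extremal distributions for the class of standard
probability measures on ℝ: for `x ≤ 0`, `sup_μ F_μ(x) = 1/(1+x²)` and
`inf_μ F_μ(x) = 0`; for `x ≥ 0`, `inf_μ F_μ(x) = x²/(1+x²)` and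
`sup_μ F_μ(x) = 1`. -/
theorem chebyshev_markov_extremal_distributions :
    (∀ x : ℝ, x ≤ 0 →
      sSup ((fun μ : Measure ℝ => distFun μ x) '' stdMeasures) = 1 / (1 + x ^ 2)) ∧
    (∀ x : ℝ, 0 ≤ x →
      sInf ((fun μ : Measure ℝ => distFun μ x) '' stdMeasures) = x ^ 2 / (1 + x ^ 2)) ∧
    (∀ x : ℝ, 0 ≤ x →
      sSup ((fun μ : Measure ℝ => distFun μ x) '' stdMeasures) = 1) ∧
    (∀ x : ℝ, x ≤ 0 →
      sInf ((fun μ : Measure ℝ => distFun μ x) '' stdMeasures) = 0) := by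
  refine ⟨?_, fun x hx => inf_nonneg hx, fun x hx => sup_eq_one hx, fun x hx => inf_nonpos hx⟩
  intro x hx
  rcases lt_or_eq_of_le hx with hx' | hx'
  · exact sup_neg hx'
  · subst hx'
    rw [sup_eq_one le_rfl]
    norm_num
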